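/- Let d ≥ 3 and let G be a d-regular graph with a vertex v whose connected component contains at least 2(d+1) vertices. Suppose u ∈ N_G(v) has no neighbour in N_G(v). Then there is a sequence of at most two Δ-switches transforming G into a graph G' such that N_{G'}(v) = N_G(v) and the set of edges of G' joining two vertices of N_G(v) equals the set of edges of G joining two vertices of N_G(v) together with exactly one new edge, which is incident with u. -/
import Mathlib


open SimpleGraph

/-- A Δ⁺-switch: five distinct vertices `v w x y z` with `vx, vw, xy, wz` edges
and `xw, yz` non-edges; the edges `xy, wz` are deleted and `xw, yz` are added. -/
def DeltaPlusSwitch {V : Type*} (G G' : SimpleGraph V) : Prop :=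
  ∃ v w x y z : V, List.Pairwise (· ≠ ·) [v, w, x, y, z] ∧
    G.Adj v x ∧ G.Adj v w ∧ G.Adj x y ∧ G.Adj w z ∧ ¬ G.Adj x w ∧ ¬ G.Adj y z ∧
    G'.edgeSet = (G.edgeSet \ {s(x, y), s(w, z)}) ∪ {s(x, w), s(y, z)}

/-- A Δ⁻-switch: five distinct vertices `v w x y z` with `vx, vw, xw, yz` edges
and `xy, wz` non-edges; the edges `xw, yz` are deleted and `xy, wz` are added. -/
def DeltaMinusSwitch {V : Type*} (G G' : SimpleGraph V) : Prop :=
  ∃ v w x y z : V, List.Pairwise (· ≠ ·) [v, w, x, y, z] ∧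
    G.Adj v x ∧ G.Adj v w ∧ G.Adj x w ∧ G.Adj y z ∧ ¬ G.Adj x y ∧ ¬ G.Adj w z ∧
    G'.edgeSet = (G.edgeSet \ {s(x, w), s(y, z)}) ∪ {s(x, y), s(w, z)}

/-- A Δ-switch is a Δ⁺-switch or a Δ⁻-switch. -/
def DeltaSwitch {V : Type*} (G G' : SimpleGraph V) : Prop :=
  DeltaPlusSwitch G G' ∨ DeltaMinusSwitch G G'

/-- Two graphs are Δ-switch equivalent if one is obtained from the other by a
finite (possibly empty) sequence of Δ-switches. -/
def DeltaEquiv {V : Type*} (G G' : SimpleGraph V) : Prop :=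
  Relation.ReflTransGen DeltaSwitch G G'

/-- A graph is `d`-regular: every vertex has exactly `d` neighbours. -/
def RegularDeg {V : Type*} (G : SimpleGraph V) (d : ℕ) : Prop :=
  ∀ x : V, (G.neighborSet x).ncard = d

section Auxiliary

variable {V : Type*}

lemma sym2_ne_of (a b c e : V) (h1 : a ≠ c ∨ b ≠ e) (h2 : a ≠ e ∨ b ≠ c) : s(a,b) ≠ s(c,e) := by
  intro h
  rcases Sym2.eq_iff.mp h with ⟨rfl, rfl⟩ | ⟨rfl, rfl⟩ <;> tauto

lemma pairwise5 (a b c d e : V) (h1 : a≠b) (h2 : a≠c) (h3 : a≠d) (h4 : a≠e) (h5 : b≠c)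
    (h6 : b≠d) (h7 : b≠e) (h8 : c≠d) (h9 : c≠e) (h10 : d≠e) :
    List.Pairwise (· ≠ ·) [a,b,c,d,e] := by
  simp only [List.pairwise_cons, List.mem_cons, List.mem_singleton, List.not_mem_nil]
  refine ⟨?_, ?_, ?_, ?_, fun a h => h.elim, List.Pairwise.nil⟩ <;>
    · rintro t h
      rcases h with rfl | rfl | rfl | rfl | rfl | h <;> first | assumption | exact h.elim

/-- Construct the graph obtained by deleting the edges `xy, wz` and adding the
pairs `xw, yz`, together with a description of its edge set and adjacency. -/
lemma switch_spec (G : SimpleGraph V) (x y w z : V) (hxy : G.Adj x y) (hwz : G.Adj w z)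
    (hxw : x ≠ w) (hyz : y ≠ z) :
    ∃ G' : SimpleGraph V,
      G'.edgeSet = (G.edgeSet \ {s(x, y), s(w, z)}) ∪ {s(x, w), s(y, z)} ∧
      ∀ a b, G'.Adj a b ↔
        ((G.Adj a b ∧ s(a,b) ≠ s(x,y) ∧ s(a,b) ≠ s(w,z)) ∨ s(a,b) = s(x,w) ∨ s(a,b) = s(y,z)) := by
  classical
  set S : Set (Sym2 V) := (G.edgeSet \ {s(x, y), s(w, z)}) ∪ {s(x, w), s(y, z)} with hS
  have hmem : ∀ a b : V, s(a,b) ∈ S ↔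
      ((G.Adj a b ∧ s(a,b) ≠ s(x,y) ∧ s(a,b) ≠ s(w,z)) ∨ s(a,b) = s(x,w) ∨ s(a,b) = s(y,z)) := by
    intro a b
    simp only [hS, Set.mem_union, Set.mem_diff, Set.mem_insert_iff, Set.mem_singleton_iff,
      mem_edgeSet]
    tauto
  have hne : ∀ a b : V, s(a,b) ∈ S → a ≠ b := by
    intro a b hab
    rw [hmem] at hab
    rcases hab with ⟨h, -⟩ | h | h
    · exact h.ne
    · rcases Sym2.eq_iff.mp h with ⟨h1, h2⟩ | ⟨h1, h2⟩ <;> rintro rfl <;> exact hxw (h1 ▸ h2 ▸ rfl)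
    · rcases Sym2.eq_iff.mp h with ⟨h1, h2⟩ | ⟨h1, h2⟩ <;> rintro rfl <;> exact hyz (h1 ▸ h2 ▸ rfl)
  refine ⟨fromEdgeSet S, ?_, ?_⟩
  · rw [edgeSet_fromEdgeSet]
    ext e
    simp only [Set.mem_diff, Set.mem_setOf_eq, and_iff_left_iff_imp]
    intro heS
    induction e with
    | h a b =>
      exact fun hed => hne a b heS (Sym2.mk_isDiag_iff.mp hed)
  · intro a b
    rw [fromEdgeSet_adj, ← hmem a b]
    exact ⟨fun h => h.1, fun h => ⟨h, hne a b h⟩⟩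

/-- Apply the final Δ⁺-switch (at `v`, joining `u` and `w0`, breaking the edges
`u Y` and `w0 Z` and creating `Y Z`) and verify all the required conclusions. -/
lemma finish_lemma (G H : SimpleGraph V) (v u w0 Y Z : V)
    (hH : H = G ∨ DeltaSwitch G H)
    (hvadj : ∀ t, H.Adj v t ↔ G.Adj v t)
    (hNN : ∀ a b, G.Adj v a → G.Adj v b → (H.Adj a b ↔ G.Adj a b))
    (h1 : H.Adj v u) (h2 : H.Adj v w0) (h3 : H.Adj u Y) (h4 : H.Adj w0 Z)
    (h5 : ¬H.Adj u w0) (h6 : ¬H.Adj Y Z)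
    (hYN : ¬G.Adj v Y) (hZN : ¬G.Adj v Z) (hwu : w0 ≠ u)
    (hYv : Y ≠ v) (hZv : Z ≠ v) (huZ : u ≠ Z) (hYZ : Y ≠ Z) :
    ∃ G' : SimpleGraph V,
      (∃ H' : SimpleGraph V, (H' = G ∨ DeltaSwitch G H') ∧ (G' = H' ∨ DeltaSwitch H' G')) ∧
      G'.neighborSet v = G.neighborSet v ∧
      (∃ w ∈ G.neighborSet v, w ≠ u ∧ G'.Adj u w ∧
        ∀ a ∈ G.neighborSet v, ∀ b ∈ G.neighborSet v,
          (G'.Adj a b ↔ (G.Adj a b ∨ (a = u ∧ b = w) ∨ (a = w ∧ b = u)))) := by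
  classical
  have hvu : v ≠ u := h1.ne
  have hvw : v ≠ w0 := h2.ne
  have hGvu : G.Adj v u := (hvadj u).mp h1
  have hGvw0 : G.Adj v w0 := (hvadj w0).mp h2
  have hw0Y : w0 ≠ Y := fun h => hYN (h ▸ hGvw0)
  have hw0Z : w0 ≠ Z := fun h => hZN (h ▸ hGvw0)
  have huY : u ≠ Y := h3.ne
  obtain ⟨G', hE, hadj⟩ := switch_spec H u Y w0 Z h3 h4 hwu.symm hYZ
  have hpw : List.Pairwise (· ≠ ·) [v, w0, u, Y, Z] :=
    pairwise5 _ _ _ _ _ hvw hvu hYv.symm hZv.symm hwu hw0Y hw0Z huY huZ hYZ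
  refine ⟨G', ⟨H, hH, Or.inr (Or.inl ⟨v, w0, u, Y, Z, hpw, h1, h2, h3, h4, h5, h6, hE⟩)⟩, ?_, ?_⟩
  · -- neighborSet
    ext t
    simp only [mem_neighborSet]
    rw [hadj v t]
    constructor
    · rintro (⟨h, -, -⟩ | h | h)
      · exact (hvadj t).mp h
      · exact absurd (Sym2.eq_iff.mp h)
          (by rintro (⟨rfl, rfl⟩ | ⟨rfl, rfl⟩); exact hvu rfl; exact hvw rfl)
      · exact absurd (Sym2.eq_iff.mp h)
          (by rintro (⟨rfl, rfl⟩ | ⟨rfl, rfl⟩); exact hYv rfl; exact hZv rfl)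
    · intro h
      exact Or.inl ⟨(hvadj t).mpr h,
        sym2_ne_of _ _ _ _ (Or.inl hvu) (Or.inl (fun he => hYv (he.symm))),
        sym2_ne_of _ _ _ _ (Or.inl hvw) (Or.inl (fun he => hZv (he.symm)))⟩
  · refine ⟨w0, hGvw0, hwu, ?_, ?_⟩
    · rw [hadj u w0]
      exact Or.inr (Or.inl rfl)
    · intro a ha b hb
      simp only [mem_neighborSet] at ha hb
      have haY : a ≠ Y := fun h => hYN (h ▸ ha)
      have hbY : b ≠ Y := fun h => hYN (h ▸ hb)
      have haZ : a ≠ Z := fun h => hZN (h ▸ ha)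
      have hbZ : b ≠ Z := fun h => hZN (h ▸ hb)
      rw [hadj a b]
      constructor
      · rintro (⟨h, -, -⟩ | h | h)
        · exact Or.inl ((hNN a b ha hb).mp h)
        · rcases Sym2.eq_iff.mp h with ⟨rfl, rfl⟩ | ⟨rfl, rfl⟩
          · exact Or.inr (Or.inl ⟨rfl, rfl⟩)
          · exact Or.inr (Or.inr ⟨rfl, rfl⟩)
        · rcases Sym2.eq_iff.mp h with ⟨rfl, rfl⟩ | ⟨rfl, rfl⟩
          · exact absurd rfl haY
          · exact absurd rfl haZ
      · rintro (h | ⟨rfl, rfl⟩ | ⟨rfl, rfl⟩)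
        · exact Or.inl ⟨(hNN a b ha hb).mpr h,
            sym2_ne_of _ _ _ _ (Or.inr hbY) (Or.inl haY),
            sym2_ne_of _ _ _ _ (Or.inr hbZ) (Or.inl haZ)⟩
        · exact Or.inr (Or.inl rfl)
        · exact Or.inr (Or.inl (Sym2.eq_swap))

/-- The far-edge lemma: in the bad case an edge `pq` avoiding the relevant
closed neighbourhoods exists, for otherwise the component of `v` is too small. -/
lemma far_lemma [Fintype V] {d : ℕ} (hd : 3 ≤ d) (G : SimpleGraph V)
    (hreg : RegularDeg G d) (v : V)
    (hC : 2 * (d + 1) ≤ {x : V | G.Reachable v x}.ncard)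
    (u w0 z0 y1 : V)
    (hvu : G.Adj v u) (hvw0 : G.Adj v w0)
    (huy1 : G.Adj u y1) (hy1v : y1 ≠ v)
    (hNz0 : ∀ t, G.Adj z0 t → (G.Adj u t ∧ t ≠ v) ∨ t = u ∨ t = w0) :
    ∃ p q, G.Adj p q ∧ ¬G.Adj y1 p ∧ p ≠ y1 ∧ p ≠ v ∧
      ¬G.Adj u q ∧ q ≠ u ∧ q ≠ w0 ∧ q ≠ z0 ∧ q ≠ v ∧ ¬(G.Adj v p ∧ G.Adj v q) := by
  classical
  by_contra hcon
  push_neg at hcon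
  have step1 : ∀ δ : V, ¬G.Adj y1 δ → δ ≠ y1 → ¬G.Adj u δ → δ ≠ v → δ ≠ w0 → δ ≠ z0 →
      ¬G.Adj v δ → False := by
    intro δ h1 h2 h3 h4 h5 h6 h7
    have hsub : G.neighborSet δ ⊆ insert w0 (G.neighborSet u \ {v, y1}) := by
      intro r hr
      rw [mem_neighborSet] at hr
      by_cases hur : G.Adj u r
      · right
        refine ⟨hur, ?_⟩
        simp only [Set.mem_insert_iff, Set.mem_singleton_iff, not_or]
        exact ⟨fun he => h7 (G.adj_symm (he ▸ hr)), fun he => h1 (G.adj_symm (he ▸ hr))⟩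
      · by_cases hru : r = u
        · exact absurd (G.adj_symm (hru ▸ hr)) h3
        · by_cases hrw : r = w0
          · exact Or.inl hrw
          · by_cases hrz : r = z0
            · subst hrz
              rcases hNz0 δ hr.symm with ⟨ha, -⟩ | rfl | rfl
              · exact absurd ha h3
              · exact absurd huy1.symm h1
              · exact absurd rfl h5
            · by_cases hrv : r = v
              · exact absurd (G.adj_symm (hrv ▸ hr)) h7
              · exact absurd (hcon δ r hr h1 h2 h4 hur hru hrw hrz hrv).1 h7
    have hpair : ({v, y1} : Set V) ⊆ G.neighborSet u := by
      rintro t (rfl | rfl)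
      · exact hvu.symm
      · exact huy1
    have hc1 : (G.neighborSet u \ {v, y1}).ncard = d - 2 := by
      rw [Set.ncard_diff hpair, hreg u, Set.ncard_pair (Ne.symm hy1v)]
    have hc2 : (G.neighborSet δ).ncard ≤ d - 1 := by
      calc (G.neighborSet δ).ncard ≤ (insert w0 (G.neighborSet u \ {v, y1})).ncard :=
            Set.ncard_le_ncard hsub (Set.toFinite _)
        _ ≤ (G.neighborSet u \ {v, y1}).ncard + 1 := Set.ncard_insert_le _ _
        _ = d - 1 := by rw [hc1]; omega
    rw [hreg δ] at hc2
    omega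
  have step2 : ∀ o : V, G.Adj y1 o → ¬G.Adj v o → o ≠ v → ¬G.Adj u o → o ≠ z0 → False := by
    intro o h1 h2 h3 h4 h5
    have hou : o ≠ u := fun he => h2 (he ▸ hvu)
    have how0 : o ≠ w0 := fun he => h2 (he ▸ hvw0)
    have hsub : G.neighborSet o ⊆ insert y1 (G.neighborSet y1) \ {o} := by
      intro r hr
      rw [mem_neighborSet] at hr
      refine ⟨?_, by simpa using hr.ne'⟩
      by_cases hy1r : G.Adj y1 r
      · exact Set.mem_insert_of_mem _ hy1r
      · by_cases hry : r = y1
        · exact hry ▸ Set.mem_insert _ _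
        · by_cases hrv : r = v
          · exact absurd (hrv ▸ hr).symm h2
          · exact absurd (hcon r o hr.symm hy1r hry hrv h4 hou how0 h5 h3).2 h2
    have hcard : (insert y1 (G.neighborSet y1) \ {o}).ncard = d := by
      have h6 : y1 ∉ G.neighborSet y1 := by simp
      have h7 : o ∈ insert y1 (G.neighborSet y1) := Set.mem_insert_of_mem _ h1
      rw [Set.ncard_diff_singleton_of_mem h7, Set.ncard_insert_of_notMem h6, hreg y1]
      omega
    have heq : G.neighborSet o = insert y1 (G.neighborSet y1) \ {o} :=
      Set.eq_of_subset_of_ncard_le hsub (by rw [hcard, hreg o]) (Set.toFinite _)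
    have humem : u ∈ G.neighborSet o := by
      rw [heq]
      exact ⟨Set.mem_insert_of_mem _ huy1.symm, by simpa using hou.symm⟩
    exact h4 (G.adj_symm humem)
  have hsub2 : {x : V | G.Reachable v x} ⊆
      insert v (insert z0 (G.neighborSet v ∪ (G.neighborSet u \ {v}))) := by
    intro c _
    by_contra hc
    simp only [Set.mem_insert_iff, Set.mem_union, Set.mem_diff, Set.mem_singleton_iff,
      mem_neighborSet, not_or] at hc
    obtain ⟨hc1, hc2, hc3, hc4⟩ := hc
    have hc5 : ¬G.Adj u c := fun ha => hc4 ⟨ha, hc1⟩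
    by_cases hy1c : G.Adj y1 c
    · exact step2 c hy1c hc3 hc1 hc5 hc2
    · have hcy1 : c ≠ y1 := fun he => hc5 (he ▸ huy1)
      have hcw0 : c ≠ w0 := fun he => hc3 (he ▸ hvw0)
      exact step1 c hy1c hcy1 hc5 hc1 hcw0 hc2 hc3
  have hb : ({x : V | G.Reachable v x}).ncard ≤ 2 * d + 1 := by
    have h1 : (G.neighborSet u \ {v}).ncard = d - 1 := by
      rw [Set.ncard_diff_singleton_of_mem (by exact hvu.symm : v ∈ G.neighborSet u), hreg u]
    calc ({x : V | G.Reachable v x}).ncard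
        ≤ (insert v (insert z0 (G.neighborSet v ∪ (G.neighborSet u \ {v})))).ncard :=
          Set.ncard_le_ncard hsub2 (Set.toFinite _)
      _ ≤ (insert z0 (G.neighborSet v ∪ (G.neighborSet u \ {v}))).ncard + 1 :=
          Set.ncard_insert_le _ _
      _ ≤ (G.neighborSet v ∪ (G.neighborSet u \ {v})).ncard + 2 := by
          have := Set.ncard_insert_le z0 (G.neighborSet v ∪ (G.neighborSet u \ {v}))
          omega
      _ ≤ (G.neighborSet v).ncard + (G.neighborSet u \ {v}).ncard + 2 := by
          have := Set.ncard_union_le (G.neighborSet v) (G.neighborSet u \ {v})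
          omega
      _ ≤ 2 * d + 1 := by rw [hreg v, h1]; omega
  omega

/-- The common ending for the two-switch cases: `H` is the result of the first
switch, which deleted the edges `y1 z0` and `p q` and created `y1 p` and `z0 q`. -/
lemma after_far (G H : SimpleGraph V) (v u w0 z0 y1 p q : V)
    (hDS : DeltaSwitch G H)
    (hadjH : ∀ a b, H.Adj a b ↔
      ((G.Adj a b ∧ s(a,b) ≠ s(y1,z0) ∧ s(a,b) ≠ s(p,q)) ∨ s(a,b) = s(y1,p) ∨ s(a,b) = s(z0,q)))
    (hvu : G.Adj v u) (hvw0 : G.Adj v w0) (hnuw0 : ¬G.Adj u w0)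
    (huy1 : G.Adj u y1) (hy1v : y1 ≠ v) (hvy1 : ¬G.Adj v y1)
    (hw0z0 : G.Adj w0 z0) (hvz0 : ¬G.Adj v z0) (hz0v : z0 ≠ v) (hz0u : z0 ≠ u)
    (hy1z0 : G.Adj y1 z0) (hw0u : w0 ≠ u)
    (hpq : G.Adj p q)
    (hpy1 : p ≠ y1) (hpv : p ≠ v) (hpu : p ≠ u) (hpz0 : p ≠ z0)
    (hqy1 : q ≠ y1) (hqv : q ≠ v) (hqu : q ≠ u) (hqz0 : q ≠ z0) (hqw0 : q ≠ w0)
    (hNpq : ¬(G.Adj v p ∧ G.Adj v q)) :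
    ∃ G' : SimpleGraph V,
      (∃ H' : SimpleGraph V, (H' = G ∨ DeltaSwitch G H') ∧ (G' = H' ∨ DeltaSwitch H' G')) ∧
      G'.neighborSet v = G.neighborSet v ∧
      (∃ w ∈ G.neighborSet v, w ≠ u ∧ G'.Adj u w ∧
        ∀ a ∈ G.neighborSet v, ∀ b ∈ G.neighborSet v,
          (G'.Adj a b ↔ (G.Adj a b ∨ (a = u ∧ b = w) ∨ (a = w ∧ b = u)))) := by
  classical
  have hw0y1 : w0 ≠ y1 := fun he => hvy1 (he ▸ hvw0)
  have hw0z0' : w0 ≠ z0 := fun he => hvz0 (he ▸ hvw0)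
  have hvadj : ∀ t, H.Adj v t ↔ G.Adj v t := by
    intro t
    rw [hadjH]
    constructor
    · rintro (⟨h, -, -⟩ | h | h)
      · exact h
      · exact absurd (Sym2.eq_iff.mp h)
          (by rintro (⟨rfl, rfl⟩ | ⟨rfl, rfl⟩); exact hy1v rfl; exact hpv rfl)
      · exact absurd (Sym2.eq_iff.mp h)
          (by rintro (⟨rfl, rfl⟩ | ⟨rfl, rfl⟩); exact hz0v rfl; exact hqv rfl)
    · intro h
      exact Or.inl ⟨h,
        sym2_ne_of _ _ _ _ (Or.inl (Ne.symm hy1v)) (Or.inl (Ne.symm hz0v)),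
        sym2_ne_of _ _ _ _ (Or.inl (Ne.symm hpv)) (Or.inl (Ne.symm hqv))⟩
  have hNN : ∀ a b, G.Adj v a → G.Adj v b → (H.Adj a b ↔ G.Adj a b) := by
    intro a b ha hb
    have hay1 : a ≠ y1 := fun he => hvy1 (he ▸ ha)
    have hby1 : b ≠ y1 := fun he => hvy1 (he ▸ hb)
    have haz0 : a ≠ z0 := fun he => hvz0 (he ▸ ha)
    have hbz0 : b ≠ z0 := fun he => hvz0 (he ▸ hb)
    rw [hadjH]
    constructor
    · rintro (⟨h, -, -⟩ | h | h)
      · exact h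
      · exact absurd (Sym2.eq_iff.mp h)
          (by rintro (⟨rfl, rfl⟩ | ⟨rfl, rfl⟩); exact hay1 rfl; exact hby1 rfl)
      · exact absurd (Sym2.eq_iff.mp h)
          (by rintro (⟨rfl, rfl⟩ | ⟨rfl, rfl⟩); exact haz0 rfl; exact hbz0 rfl)
    · intro h
      refine Or.inl ⟨h, sym2_ne_of _ _ _ _ (Or.inl hay1) (Or.inl haz0), ?_⟩
      have h1 : a ≠ p ∨ b ≠ q := by
        by_contra hcc
        push_neg at hcc
        exact hNpq ⟨hcc.1 ▸ ha, hcc.2 ▸ hb⟩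
      have h2 : a ≠ q ∨ b ≠ p := by
        by_contra hcc
        push_neg at hcc
        exact hNpq ⟨hcc.2 ▸ hb, hcc.1 ▸ ha⟩
      exact sym2_ne_of _ _ _ _ h1 h2
  have h1fin : H.Adj v u := (hvadj u).mpr hvu
  have h2fin : H.Adj v w0 := (hvadj w0).mpr hvw0
  have h3fin : H.Adj u y1 := by
    rw [hadjH]
    exact Or.inl ⟨huy1,
      sym2_ne_of _ _ _ _ (Or.inl huy1.ne) (Or.inl (Ne.symm hz0u)),
      sym2_ne_of _ _ _ _ (Or.inl (Ne.symm hpu)) (Or.inl (Ne.symm hqu))⟩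
  have h4fin : H.Adj w0 z0 := by
    rw [hadjH]
    exact Or.inl ⟨hw0z0,
      sym2_ne_of _ _ _ _ (Or.inl hw0y1) (Or.inl hw0z0'),
      sym2_ne_of _ _ _ _ (Or.inr (Ne.symm hqz0)) (Or.inl (Ne.symm hqw0))⟩
  have h5fin : ¬H.Adj u w0 := by
    rw [hadjH]
    rintro (⟨h, -, -⟩ | h | h)
    · exact hnuw0 h
    · exact absurd (Sym2.eq_iff.mp h)
        (by rintro (⟨rfl, rfl⟩ | ⟨rfl, rfl⟩); exact huy1.ne rfl; exact hpu rfl)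
    · exact absurd (Sym2.eq_iff.mp h)
        (by rintro (⟨rfl, rfl⟩ | ⟨rfl, rfl⟩); exact hz0u rfl; exact hqu rfl)
  have h6fin : ¬H.Adj y1 z0 := by
    rw [hadjH]
    rintro (⟨-, h, -⟩ | h | h)
    · exact h rfl
    · rcases Sym2.eq_iff.mp h with ⟨-, h2⟩ | ⟨h1, -⟩
      · exact hpz0 h2.symm
      · exact hpy1 h1.symm
    · rcases Sym2.eq_iff.mp h with ⟨h1, -⟩ | ⟨h1, -⟩
      · exact hy1z0.ne h1
      · exact hqy1 h1.symm
  exact finish_lemma G H v u w0 y1 z0 (Or.inr hDS) hvadj hNN h1fin h2fin h3fin h4fin h5fin h6fin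
    hvy1 hvz0 hw0u hy1v hz0v (Ne.symm hz0u) hy1z0.ne

end Auxiliary

/-- If `v` lies in a component of size at least `2(d+1)` of a `d`-regular graph
`G` (`d ≥ 3`) and `u ∈ N_G(v)` has no neighbour inside `N_G(v)`, then at most two
Δ-switches give a graph `G'` with `N_{G'}(v) = N_G(v)` whose edges inside
`N_G(v)` are those of `G` plus exactly one new edge incident with `u`. -/
theorem insert_edge_at_isolated_neighbor {V : Type*} [Fintype V] {d : ℕ}
    (hd : 3 ≤ d) (G : SimpleGraph V) (hreg : RegularDeg G d) (v : V)
    (hC : 2 * (d + 1) ≤ {x : V | G.Reachable v x}.ncard)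
    (u : V) (hu : u ∈ G.neighborSet v)
    (hiso : ∀ w ∈ G.neighborSet v, ¬ G.Adj u w) :
    ∃ G' : SimpleGraph V,
      (∃ H : SimpleGraph V, (H = G ∨ DeltaSwitch G H) ∧ (G' = H ∨ DeltaSwitch H G')) ∧
      G'.neighborSet v = G.neighborSet v ∧
      (∃ w ∈ G.neighborSet v, w ≠ u ∧ G'.Adj u w ∧
        ∀ a ∈ G.neighborSet v, ∀ b ∈ G.neighborSet v,
          (G'.Adj a b ↔ (G.Adj a b ∨ (a = u ∧ b = w) ∨ (a = w ∧ b = u)))) := by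
  classical
  rw [mem_neighborSet] at hu
  have hvu : G.Adj v u := hu
  have hnuw : ∀ w, G.Adj v w → ¬G.Adj u w := fun w hw => hiso w hw
  have hA : ∀ y, G.Adj u y → y ≠ v → ¬G.Adj v y := fun y hy hyv hva => hiso y hva hy
  -- a neighbour w0 ≠ u of v
  have hw0ex : ∃ w0, G.Adj v w0 ∧ w0 ≠ u := by
    have hcard : (G.neighborSet v \ {u}).ncard = d - 1 := by
      rw [Set.ncard_diff_singleton_of_mem (by exact hu : u ∈ G.neighborSet v), hreg v]
    have hne : (G.neighborSet v \ {u}).Nonempty := by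
      apply Set.nonempty_of_ncard_ne_zero
      rw [hcard]; omega
    obtain ⟨w0, hw0⟩ := hne
    exact ⟨w0, hw0.1, by simpa using hw0.2⟩
  obtain ⟨w0, hvw0, hw0u⟩ := hw0ex
  have hnuw0 : ¬G.Adj u w0 := hnuw w0 hvw0
  -- w0 has a neighbour outside N[v]
  have hz0ex : ∃ z, G.Adj w0 z ∧ ¬G.Adj v z ∧ z ≠ v := by
    by_contra h
    push_neg at h
    have hsub : G.neighborSet w0 ⊆ (insert v (G.neighborSet v)) \ {u, w0} := by
      intro r hr
      rw [mem_neighborSet] at hr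
      constructor
      · by_cases hrv : r = v
        · exact hrv ▸ Set.mem_insert _ _
        · by_cases hvr : G.Adj v r
          · exact Set.mem_insert_of_mem _ hvr
          · exact absurd (h r hr hvr) hrv
      · simp only [Set.mem_insert_iff, Set.mem_singleton_iff, not_or]
        exact ⟨fun he => hnuw0 (G.adj_symm (he ▸ hr)), fun he => G.irrefl (he ▸ hr)⟩
    have hps : ({u, w0} : Set V) ⊆ insert v (G.neighborSet v) := by
      rintro t (rfl | rfl)
      · exact Set.mem_insert_of_mem _ hu
      · exact Set.mem_insert_of_mem _ hvw0
    have hc1 : ((insert v (G.neighborSet v)) \ {u, w0}).ncard = d - 1 := by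
      rw [Set.ncard_diff hps, Set.ncard_insert_of_notMem (by simp), hreg v,
        Set.ncard_pair (Ne.symm hw0u)]
      omega
    have hc2 := Set.ncard_le_ncard hsub (Set.toFinite _)
    rw [hreg w0, hc1] at hc2
    omega
  obtain ⟨z0, hw0z0, hvz0, hz0v⟩ := hz0ex
  have hz0u : z0 ≠ u := fun he => hnuw0 (G.adj_symm (he ▸ hw0z0))
  -- dichotomy: the good one-switch case
  by_cases hgood : ∃ w, G.Adj v w ∧ w ≠ u ∧ ∃ z, G.Adj w z ∧ ¬G.Adj v z ∧ z ≠ v ∧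
      ∃ y, G.Adj u y ∧ y ≠ v ∧ z ≠ y ∧ ¬G.Adj y z
  · obtain ⟨w, hvw, hwu, z, hwz, hvz, hzv, y, huy, hyv, hzy, hyz⟩ := hgood
    have huz : u ≠ z := fun he => (hnuw w hvw) (G.adj_symm (he ▸ hwz))
    exact finish_lemma G G v u w y z (Or.inl rfl) (fun t => Iff.rfl)
      (fun a b _ _ => Iff.rfl) hvu hvw huy hwz (hnuw w hvw) hyz
      (hA y huy hyv) hvz hwu hyv hzv huz (Ne.symm hzy)
  -- bad case
  push_neg at hgood
  have hbady : ∀ y, G.Adj u y → y ≠ v → z0 ≠ y → G.Adj y z0 :=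
    fun y h1 h2 h3 => hgood w0 hvw0 hw0u z0 hw0z0 hvz0 hz0v y h1 h2 h3
  by_cases hα : G.Adj u z0
  · -- case α : z0 ∈ A
    have hz0A : z0 ∈ G.neighborSet u \ {v} := ⟨hα, by simpa using hz0v⟩
    have hcA : (G.neighborSet u \ {v}).ncard = d - 1 := by
      rw [Set.ncard_diff_singleton_of_mem (by exact hvu.symm : v ∈ G.neighborSet u), hreg u]
    have hcAz : ((G.neighborSet u \ {v}) \ {z0}).ncard = d - 2 := by
      rw [Set.ncard_diff_singleton_of_mem hz0A, hcA]
      omega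
    -- neighbourhood of z0 is exactly {u, w0} ∪ (A \ {z0})
    have hsubz : insert u (insert w0 ((G.neighborSet u \ {v}) \ {z0})) ⊆ G.neighborSet z0 := by
      intro t ht
      rcases ht with rfl | rfl | ⟨⟨ht1, ht2⟩, ht3⟩
      · exact hα.symm
      · exact hw0z0.symm
      · rw [mem_neighborSet] at ht1 ⊢
        simp only [Set.mem_singleton_iff] at ht2 ht3
        exact (hbady t ht1 ht2 (Ne.symm ht3)).symm
    have hcz : (insert u (insert w0 ((G.neighborSet u \ {v}) \ {z0}))).ncard = d := by
      have h1 : w0 ∉ (G.neighborSet u \ {v}) \ {z0} := fun hm => hnuw0 hm.1.1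
      have h2 : u ∉ insert w0 ((G.neighborSet u \ {v}) \ {z0}) := by
        rintro (rfl | hm)
        · exact hw0u rfl
        · exact G.irrefl hm.1.1
      rw [Set.ncard_insert_of_notMem h2, Set.ncard_insert_of_notMem h1, hcAz]
      omega
    have heqz : insert u (insert w0 ((G.neighborSet u \ {v}) \ {z0})) = G.neighborSet z0 :=
      Set.eq_of_subset_of_ncard_le hsubz (by rw [hreg z0, hcz]) (Set.toFinite _)
    have hNz0 : ∀ t, G.Adj z0 t → (G.Adj u t ∧ t ≠ v) ∨ t = u ∨ t = w0 := by
      intro t ht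
      have : t ∈ insert u (insert w0 ((G.neighborSet u \ {v}) \ {z0})) := heqz ▸ ht
      rcases this with rfl | rfl | ⟨⟨ht1, ht2⟩, -⟩
      · exact Or.inr (Or.inl rfl)
      · exact Or.inr (Or.inr rfl)
      · exact Or.inl ⟨ht1, by simpa using ht2⟩
    -- pick y1 ∈ A \ {z0}
    have hy1ex : ((G.neighborSet u \ {v}) \ {z0}).Nonempty := by
      apply Set.nonempty_of_ncard_ne_zero
      rw [hcAz]; omega
    obtain ⟨y1, ⟨⟨huy1, hy1v'⟩, hy1z0'⟩⟩ := hy1ex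
    rw [mem_neighborSet] at huy1
    simp only [Set.mem_singleton_iff] at hy1v' hy1z0'
    have hy1v : y1 ≠ v := hy1v'
    have hy1z0' : y1 ≠ z0 := hy1z0'
    have hy1z0 : G.Adj y1 z0 := hbady y1 huy1 hy1v (Ne.symm hy1z0')
    obtain ⟨p, q, f1, f2, f3, f4, f5, f6, f7, f8, f9, f10⟩ :=
      far_lemma hd G hreg v hC u w0 z0 y1 hvu hvw0 huy1 hy1v hNz0
    have hnz0q : ¬G.Adj z0 q := by
      intro ha
      rcases hNz0 q ha with ⟨h, -⟩ | rfl | rfl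
      · exact f5 h
      · exact f6 rfl
      · exact f7 rfl
    obtain ⟨H, hEH, hadjH⟩ := switch_spec G y1 z0 p q hy1z0 f1 (Ne.symm f3) (Ne.symm f8)
    have hpu : p ≠ u := fun he => f2 (he ▸ huy1.symm)
    have hqy1 : q ≠ y1 := fun he => f5 (he ▸ huy1)
    have hpz0 : p ≠ z0 := fun he => f2 (he ▸ hy1z0)
    have hDS : DeltaSwitch G H := by
      refine Or.inr ⟨u, z0, y1, p, q, ?_, huy1, hα, hy1z0, f1, f2, hnz0q, hEH⟩
      exact pairwise5 _ _ _ _ _ hα.ne huy1.ne (Ne.symm hpu) (Ne.symm f6)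
        (Ne.symm hy1z0') (Ne.symm hpz0) (Ne.symm f8) (Ne.symm f3) (Ne.symm hqy1) f1.ne
    exact after_far G H v u w0 z0 y1 p q hDS hadjH hvu hvw0 hnuw0 huy1 hy1v
      (hA y1 huy1 hy1v) hw0z0 hvz0 hz0v hz0u hy1z0 hw0u f1 f3 f4 hpu hpz0
      hqy1 f9 f6 f8 f7 f10
  · -- case β : z0 ∉ A
    have hz0A : ∀ y, G.Adj u y → y ≠ v → z0 ≠ y := fun y h1 _ he => hα (he ▸ h1)
    have hcA : (G.neighborSet u \ {v}).ncard = d - 1 := by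
      rw [Set.ncard_diff_singleton_of_mem (by exact hvu.symm : v ∈ G.neighborSet u), hreg u]
    have hsubz : insert w0 (G.neighborSet u \ {v}) ⊆ G.neighborSet z0 := by
      intro t ht
      rcases ht with rfl | ⟨ht1, ht2⟩
      · exact hw0z0.symm
      · rw [mem_neighborSet] at ht1 ⊢
        simp only [Set.mem_singleton_iff] at ht2
        exact (hbady t ht1 ht2 (hz0A t ht1 ht2)).symm
    have hcz : (insert w0 (G.neighborSet u \ {v})).ncard = d := by
      have h1 : w0 ∉ G.neighborSet u \ {v} := fun hm => hnuw0 hm.1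
      rw [Set.ncard_insert_of_notMem h1, hcA]
      omega
    have heqz : insert w0 (G.neighborSet u \ {v}) = G.neighborSet z0 :=
      Set.eq_of_subset_of_ncard_le hsubz (by rw [hreg z0, hcz]) (Set.toFinite _)
    have hNz0 : ∀ t, G.Adj z0 t → (G.Adj u t ∧ t ≠ v) ∨ t = u ∨ t = w0 := by
      intro t ht
      have : t ∈ insert w0 (G.neighborSet u \ {v}) := heqz ▸ ht
      rcases this with rfl | ⟨ht1, ht2⟩
      · exact Or.inr (Or.inr rfl)
      · exact Or.inl ⟨ht1, by simpa using ht2⟩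
    by_cases hpairc : ∃ y1 y2, G.Adj u y1 ∧ y1 ≠ v ∧ G.Adj u y2 ∧ y2 ≠ v ∧ G.Adj y1 y2
    · -- case β1 : A contains an edge
      obtain ⟨y1, y2, huy1, hy1v, huy2, hy2v, hy1y2⟩ := hpairc
      have hy1z0 : G.Adj y1 z0 := hbady y1 huy1 hy1v (hz0A y1 huy1 hy1v)
      have hy2z0 : G.Adj y2 z0 := hbady y2 huy2 hy2v (hz0A y2 huy2 hy2v)
      obtain ⟨p, q, f1, f2, f3, f4, f5, f6, f7, f8, f9, f10⟩ :=
        far_lemma hd G hreg v hC u w0 z0 y1 hvu hvw0 huy1 hy1v hNz0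
      have hnz0q : ¬G.Adj z0 q := by
        intro ha
        rcases hNz0 q ha with ⟨h, -⟩ | rfl | rfl
        · exact f5 h
        · exact f6 rfl
        · exact f7 rfl
      obtain ⟨H, hEH, hadjH⟩ := switch_spec G y1 z0 p q hy1z0 f1 (Ne.symm f3) (Ne.symm f8)
      have hpu : p ≠ u := fun he => f2 (he ▸ huy1.symm)
      have hqy1 : q ≠ y1 := fun he => f5 (he ▸ huy1)
      have hpz0 : p ≠ z0 := fun he => f2 (he ▸ hy1z0)
      have hpy2 : p ≠ y2 := fun he => f2 (he ▸ hy1y2)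
      have hqy2 : q ≠ y2 := fun he => f5 (he ▸ huy2)
      have hDS : DeltaSwitch G H := by
        refine Or.inr ⟨y2, z0, y1, p, q, ?_, hy1y2.symm, hy2z0, hy1z0, f1, f2, hnz0q, hEH⟩
        exact pairwise5 _ _ _ _ _ hy2z0.ne (Ne.symm hy1y2.ne) (Ne.symm hpy2) (Ne.symm hqy2)
          (Ne.symm (hy1z0.ne)) (Ne.symm hpz0) (Ne.symm f8) (Ne.symm f3) (Ne.symm hqy1) f1.ne
      exact after_far G H v u w0 z0 y1 p q hDS hadjH hvu hvw0 hnuw0 huy1 hy1v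
        (hA y1 huy1 hy1v) hw0z0 hvz0 hz0v hz0u hy1z0 hw0u f1 f3 f4 hpu hpz0
        hqy1 f9 f6 f8 f7 f10
    · -- case β2 : A is independent
      push_neg at hpairc
      have hindep : ∀ y1 y2, G.Adj u y1 → y1 ≠ v → G.Adj u y2 → y2 ≠ v → ¬G.Adj y1 y2 :=
        fun y1 y2 h1 h2 h3 h4 => hpairc y1 y2 h1 h2 h3 h4
      -- two distinct elements of A
      have htwo : 1 < (G.neighborSet u \ {v}).ncard := by rw [hcA]; omega
      obtain ⟨y1, y2, hy1m, hy2m, hy1y2ne⟩ :=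
        (Set.one_lt_ncard_iff (Set.toFinite _)).mp htwo
      obtain ⟨huy1, hy1v⟩ := hy1m
      obtain ⟨huy2, hy2v⟩ := hy2m
      rw [mem_neighborSet] at huy1 huy2
      simp only [Set.mem_singleton_iff] at hy1v hy2v
      have hy1z0 : G.Adj y1 z0 := hbady y1 huy1 hy1v (hz0A y1 huy1 hy1v)
      have hy2z0 : G.Adj y2 z0 := hbady y2 huy2 hy2v (hz0A y2 huy2 hy2v)
      have hnind : ¬G.Adj y1 y2 := hindep y1 y2 huy1 hy1v huy2 hy2v
      -- a neighbour q of y2 distinct from u and z0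
      have hqex : ∃ q, G.Adj y2 q ∧ q ≠ u ∧ q ≠ z0 := by
        by_contra h
        push_neg at h
        have hsub : G.neighborSet y2 ⊆ {u, z0} := by
          intro r hr
          rw [mem_neighborSet] at hr
          by_cases hru : r = u
          · exact Or.inl hru
          · exact Or.inr (h r hr hru)
        have := Set.ncard_le_ncard hsub (Set.toFinite _)
        have h2 : ({u, z0} : Set V).ncard ≤ 2 := Set.ncard_insert_le _ _ |>.trans (by simp)
        rw [hreg y2] at this
        omega
      obtain ⟨q, huy2q, hqu, hqz0⟩ := hqex
      have hqw0 : q ≠ w0 := by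
        intro he
        exact hnind (hgood w0 hvw0 hw0u y2 (he ▸ huy2q).symm (hA y2 huy2 hy2v) hy2v y1 huy1 hy1v
          (Ne.symm hy1y2ne))
      have hnz0q : ¬G.Adj z0 q := by
        intro ha
        rcases hNz0 q ha with ⟨h1, h2⟩ | rfl | rfl
        · exact hindep y2 q huy2 hy2v h1 h2 huy2q
        · exact hqu rfl
        · exact hqw0 rfl
      have hqv : q ≠ v := fun he => (hA y2 huy2 hy2v) (G.adj_symm (he ▸ huy2q))
      have hqy1 : q ≠ y1 := fun he => hnind (G.adj_symm (he ▸ huy2q))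
      obtain ⟨H, hEH, hadjH⟩ := switch_spec G y1 z0 y2 q hy1z0 huy2q hy1y2ne (Ne.symm hqz0)
      have hDS : DeltaSwitch G H := by
        refine Or.inl ⟨u, y2, y1, z0, q, ?_, huy1, huy2, hy1z0, huy2q, hnind, hnz0q, hEH⟩
        exact pairwise5 _ _ _ _ _ huy2.ne huy1.ne (Ne.symm hz0u) (Ne.symm hqu)
          (Ne.symm hy1y2ne) hy2z0.ne huy2q.ne hy1z0.ne (Ne.symm hqy1) (Ne.symm hqz0)
      exact after_far G H v u w0 z0 y1 y2 q hDS hadjH hvu hvw0 hnuw0 huy1 hy1v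
        (hA y1 huy1 hy1v) hw0z0 hvz0 hz0v hz0u hy1z0 hw0u huy2q
        (Ne.symm hy1y2ne) hy2v huy2.ne' hy2z0.ne
        hqy1 hqv hqu hqz0 hqw0 (fun hcc => (hA y2 huy2 hy2v) hcc.1)
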